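/- For every integer s ≥ 3, if every graph H with α(H) < s and |H| ≥ 2 has its vertex set expressible as a union of at most c·(|H|/log|H|)^{(s−2)/(s−1)} cliques, then every K_{s,1}-free graph G with |G| ≥ 2 admits a clique cover of size at most c·|G|^{2−1/(s−1)}/(log|G|)^{(s−2)/(s−1)}. -/

import Mathlib

open SimpleGraph Finset

/-- A stable (independent) set: pairwise nonadjacent vertices. -/
def IsStableSet {V : Type*} (G : SimpleGraph V) (T : Finset V) : Prop :=
  ∀ ⦃u⦄, u ∈ T → ∀ ⦃v⦄, v ∈ T → u ≠ v → ¬G.Adj u v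

/-- `G` is `K_{s,t}`-free. -/
def KstFree {V : Type*} (G : SimpleGraph V) (s t : ℕ) : Prop :=
  ¬ ∃ A B : Finset V, Disjoint A B ∧ A.card = s ∧ B.card = t ∧
      IsStableSet G A ∧ IsStableSet G B ∧ ∀ a ∈ A, ∀ b ∈ B, G.Adj a b

/-- A clique cover of `G`. -/
def IsCliqueCover {V : Type*} (G : SimpleGraph V) (C : Finset (Finset V)) : Prop :=
  (∀ X ∈ C, G.IsClique (X : Set V)) ∧
    ∀ u v : V, G.Adj u v → ∃ X ∈ C, u ∈ X ∧ v ∈ X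

/-- For `s ≥ 3`: if every graph `H` with `α(H) < s` and `|H| ≥ 2` has its vertex set
expressible as a union of at most `c·(|H|/log|H|)^{(s-2)/(s-1)}` cliques, then every
`K_{s,1}`-free graph `G` with `|G| ≥ 2` admits a clique cover of size at most
`c·|G|^{2-1/(s-1)}/(log|G|)^{(s-2)/(s-1)}`. -/
theorem stmt_11 (s : ℕ) (hs : 3 ≤ s) (c : ℝ)
    (hyp : ∀ (W : Type) [Fintype W] (H : SimpleGraph W),
      (∀ T : Finset W, IsStableSet H T → T.card < s) →
      2 ≤ Fintype.card W →
      ∃ F : Finset (Finset W),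
        (∀ A ∈ F, H.IsClique (A : Set W)) ∧
        (∀ w : W, ∃ A ∈ F, w ∈ A) ∧
        (F.card : ℝ) ≤ c * ((Fintype.card W : ℝ) / Real.logb 2 (Fintype.card W))
          ^ ((s - 2 : ℝ) / (s - 1 : ℝ)))
    (V : Type) [Fintype V] (G : SimpleGraph V)
    (hfree : KstFree G s 1) (hV : 2 ≤ Fintype.card V) :
    ∃ C : Finset (Finset V), IsCliqueCover G C ∧
      (C.card : ℝ) ≤ c * (Fintype.card V : ℝ) ^ ((2 : ℝ) - 1 / (s - 1 : ℝ)) /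
        (Real.logb 2 (Fintype.card V)) ^ ((s - 2 : ℝ) / (s - 1 : ℝ)) := by
  classical
  set n : ℕ := Fintype.card V with hn
  set L : ℝ := Real.logb 2 n with hL
  set β : ℝ := ((s : ℝ) - 2) / ((s : ℝ) - 1) with hβ
  have hn2 : (2 : ℝ) ≤ (n : ℝ) := by exact_mod_cast hV
  have hnpos : (0 : ℝ) < (n : ℝ) := by linarith
  have hLpos : (0 : ℝ) < L := Real.logb_pos (by norm_num) (by linarith)
  have hXpos : (0 : ℝ) < ((n : ℝ) / L) ^ β := Real.rpow_pos_of_pos (by positivity) _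
  -- key construction: for each vertex v, a family of cliques in the neighborhood
  have key : ∀ v : V, ∃ F : Finset (Finset V),
      (∀ A ∈ F, ∀ u ∈ A, ∀ w ∈ A, u ≠ w → G.Adj v u → G.Adj v w → G.Adj u w) ∧
      (∀ w : V, ∃ A ∈ F, w ∈ A) ∧
      (F.card : ℝ) ≤ c * ((n : ℝ) / L) ^ β := by
    intro v
    let Hv : SimpleGraph V :=
      { Adj := fun u w => u ≠ w ∧ (G.Adj u w ∨ ¬ G.Adj v u ∨ ¬ G.Adj v w)
        symm := by
          refine ⟨fun u w h => ?_⟩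
          refine ⟨h.1.symm, ?_⟩
          rcases h.2 with h2 | h2 | h2
          · exact Or.inl h2.symm
          · exact Or.inr (Or.inr h2)
          · exact Or.inr (Or.inl h2)
        loopless := ⟨fun u h => h.1 rfl⟩ }
    have hstab : ∀ T : Finset V, IsStableSet Hv T → T.card < s := by
      intro T hT
      by_contra hcard
      push_neg at hcard
      by_cases hall : ∀ u ∈ T, G.Adj v u
      · obtain ⟨A, hAT, hAcard⟩ := Finset.exists_subset_card_eq hcard
        refine hfree ⟨A, {v}, ?_, hAcard, Finset.card_singleton v, ?_, ?_, ?_⟩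
        · rw [Finset.disjoint_singleton_right]
          intro hv
          exact G.irrefl (hall v (hAT hv))
        · intro u hu w hw huw hadj
          exact hT (hAT hu) (hAT hw) huw ⟨huw, Or.inl hadj⟩
        · intro u hu w hw huw
          simp only [Finset.mem_singleton] at hu hw
          exact absurd (hu.trans hw.symm) huw
        · intro a ha b hb
          simp only [Finset.mem_singleton] at hb
          subst hb
          exact (hall a (hAT ha)).symm
      · push_neg at hall
        obtain ⟨u, huT, hu⟩ := hall
        have h2 : 1 < T.card := by omega
        obtain ⟨w, hwT, hwu⟩ := Finset.exists_mem_ne h2 u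
        exact hT huT hwT (Ne.symm hwu) ⟨Ne.symm hwu, Or.inr (Or.inl hu)⟩
    obtain ⟨F, hFclq, hFcov, hFcard⟩ := hyp V Hv hstab hV
    refine ⟨F, ?_, hFcov, hFcard⟩
    intro A hA u huA w hwA huw hvu hvw
    have := hFclq A hA huA hwA huw
    rcases this.2 with h | h | h
    · exact h
    · exact absurd hvu h
    · exact absurd hvw h
  choose F hclq hcov hcard using key
  -- c > 0
  have hc : 0 < c := by
    obtain ⟨w⟩ : Nonempty V := Fintype.card_pos_iff.mp (by omega)
    obtain ⟨A, hA, hwA⟩ := hcov w w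
    have h1 : (1 : ℝ) ≤ ((F w).card : ℝ) := by
      exact_mod_cast Finset.card_pos.mpr ⟨A, hA⟩
    nlinarith [hcard w, hXpos]
  -- assemble the cover
  refine ⟨Finset.univ.biUnion (fun v => (F v).image
      (fun A => insert v (A.filter (fun u => G.Adj v u)))), ⟨?_, ?_⟩, ?_⟩
  · intro X hX
    simp only [Finset.mem_biUnion, Finset.mem_image, Finset.mem_univ, true_and] at hX
    obtain ⟨v, A, hA, rfl⟩ := hX
    intro a ha b hb hab
    simp only [Finset.coe_insert, Set.mem_insert_iff, Finset.mem_coe,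
      Finset.mem_filter] at ha hb
    rcases ha with rfl | ⟨haA, hva⟩
    · rcases hb with rfl | ⟨hbA, hvb⟩
      · exact absurd rfl hab
      · exact hvb
    · rcases hb with rfl | ⟨hbA, hvb⟩
      · exact hva.symm
      · exact hclq v A hA a haA b hbA hab hva hvb
  · intro u w huw
    obtain ⟨A, hA, huA⟩ := hcov w u
    refine ⟨insert w (A.filter (fun x => G.Adj w x)), ?_, ?_, Finset.mem_insert_self _ _⟩
    · simp only [Finset.mem_biUnion, Finset.mem_image, Finset.mem_univ, true_and]
      exact ⟨w, A, hA, rfl⟩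
    · exact Finset.mem_insert_of_mem (Finset.mem_filter.mpr ⟨huA, huw.symm⟩)
  · calc ((Finset.univ.biUnion (fun v => (F v).image
        (fun A => insert v (A.filter (fun u => G.Adj v u))))).card : ℝ)
        ≤ ∑ v : V, (((F v).image
            (fun A => insert v (A.filter (fun u => G.Adj v u)))).card : ℝ) := by
          exact_mod_cast Finset.card_biUnion_le
      _ ≤ ∑ v : V, (((F v).card : ℝ)) := by
          refine Finset.sum_le_sum fun v _ => ?_
          exact_mod_cast Finset.card_image_le
      _ ≤ ∑ _v : V, c * ((n : ℝ) / L) ^ β :=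
          Finset.sum_le_sum fun v _ => hcard v
      _ = (n : ℝ) * (c * ((n : ℝ) / L) ^ β) := by
          rw [Finset.sum_const, Finset.card_univ, nsmul_eq_mul]
      _ = c * (n : ℝ) ^ ((2 : ℝ) - 1 / ((s : ℝ) - 1)) / L ^ β := by
          have hs1 : ((s : ℝ) - 1) ≠ 0 := by
            have : (3 : ℝ) ≤ (s : ℝ) := by exact_mod_cast hs
            linarith
          have hexp : (2 : ℝ) - 1 / ((s : ℝ) - 1) = 1 + β := by
            rw [hβ]; field_simp; ring
          rw [hexp, Real.rpow_add hnpos, Real.rpow_one,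
            Real.div_rpow (le_of_lt hnpos) (le_of_lt hLpos)]
          field_simp
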